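/- Let M₁, M₂, ..., Mₙ be d×d real symmetric positive definite matrices. Then the function v_c: ℝ₊^n → ℝ₊ defined by v_c(x) = det(∑_{i=1}^n x_i M_i) is supermodular: for any x, y ∈ ℝ₊^n, v_c(x) + v_c(y) ≤ v_c(x∨y) + v_c(x∧y). -/

import Mathlib

open Matrix

namespace Stmt7Aux

variable {d : ℕ}

open scoped MatrixOrder in
lemma psd_eq_ct_mul {B : Matrix (Fin d) (Fin d) ℝ} (hB : B.PosSemidef) :
    ∃ C : Matrix (Fin d) (Fin d) ℝ, B = Cᴴ * C := by
  classical
  obtain ⟨X, hX, -, hXB⟩ := CFC.exists_sqrt_of_isSelfAdjoint_of_quasispectrumRestricts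
    hB.isHermitian (QuasispectrumRestricts.nnreal_of_nonneg hB.nonneg)
  refine ⟨X, ?_⟩
  rw [← hXB, show Xᴴ = X from hX]

lemma cs {B : Matrix (Fin d) (Fin d) ℝ} (hB : B.PosSemidef) (u w : Fin d → ℝ) :
    (u ⬝ᵥ B *ᵥ w) ^ 2 ≤ (u ⬝ᵥ B *ᵥ u) * (w ⬝ᵥ B *ᵥ w) := by
  obtain ⟨C, rfl⟩ := psd_eq_ct_mul hB
  have key : ∀ p q : Fin d → ℝ, p ⬝ᵥ (Cᴴ * C) *ᵥ q = (C *ᵥ p) ⬝ᵥ (C *ᵥ q) := by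
    intro p q
    rw [← Matrix.mulVec_mulVec, Matrix.dotProduct_mulVec]
    congr 1
    rw [show Cᴴ = Cᵀ from rfl, Matrix.vecMul_transpose]
  rw [key, key, key]
  simpa [dotProduct, pow_two] using
    Finset.sum_mul_sq_le_sq_mul_sq Finset.univ (C *ᵥ u) (C *ᵥ w)

lemma key_pd {A : Matrix (Fin d) (Fin d) ℝ} (hA : A.PosDef) (u w : Fin d → ℝ) :
    (A + vecMulVec u u).det + (A + vecMulVec w w).det
      ≤ (A + vecMulVec u u + vecMulVec w w).det + A.det := by
  have hdet : IsUnit A.det := hA.det_pos.ne'.isUnit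
  have hinv : A⁻¹.PosDef := hA.inv
  have hsymB : A⁻¹ᵀ = A⁻¹ := by
    have := hinv.isHermitian
    simpa [Matrix.IsHermitian] using this
  have hentry : ∀ i j, A⁻¹ j i = A⁻¹ i j := by
    intro i j
    have := congrFun (congrFun hsymB i) j
    simpa [Matrix.transpose_apply] using this
  have hsym : ∀ p q : Fin d → ℝ, p ⬝ᵥ A⁻¹ *ᵥ q = q ⬝ᵥ A⁻¹ *ᵥ p := by
    intro p q
    simp only [dotProduct, Matrix.mulVec, Finset.mul_sum]
    rw [Finset.sum_comm]
    refine Finset.sum_congr rfl fun i _ => Finset.sum_congr rfl fun j _ => ?_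
    rw [hentry i j]
    ring
  have comp : ∀ p q : Fin d → ℝ,
      (∑ x, (∑ i, p i * A⁻¹ i x) * q x) = p ⬝ᵥ A⁻¹ *ᵥ q := by
    intro p q
    simp only [dotProduct, Matrix.mulVec, Finset.mul_sum, Finset.sum_mul]
    rw [Finset.sum_comm]
    refine Finset.sum_congr rfl fun i _ => Finset.sum_congr rfl fun j _ => ?_
    ring
  -- single rank one updates
  have single : ∀ v : Fin d → ℝ,
      (A + vecMulVec v v).det = A.det * (1 + v ⬝ᵥ A⁻¹ *ᵥ v) := by
    intro v
    have h1 : A + vecMulVec v v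
        = A + (Matrix.of (fun i (_ : Fin 1) => v i)) * (Matrix.of (fun (_ : Fin 1) i => v i)) := by
      ext i k
      simp [Matrix.mul_apply, vecMulVec]
    rw [h1, Matrix.det_add_mul _ _ hdet]
    congr 1
    rw [Matrix.det_fin_one]
    simp only [Matrix.add_apply, Matrix.one_apply_eq, Matrix.mul_apply, Matrix.of_apply]
    rw [comp]
  rw [single u, single w]
  -- double rank one update
  have hUV : A + vecMulVec u u + vecMulVec w w
      = A + (Matrix.of (fun i (j : Fin 2) => if j = 0 then u i else w i))
          * (Matrix.of (fun (j : Fin 2) i => if j = 0 then u i else w i)) := by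
    ext i k
    simp [Matrix.mul_apply, Fin.sum_univ_two, vecMulVec]
    ring
  rw [hUV, Matrix.det_add_mul _ _ hdet, Matrix.det_fin_two]
  have e : ∀ j k : Fin 2,
      ((1 : Matrix (Fin 2) (Fin 2) ℝ) + Matrix.of (fun (j : Fin 2) i => if j = 0 then u i else w i)
          * A⁻¹ * Matrix.of (fun i (j : Fin 2) => if j = 0 then u i else w i)) j k
      = (if j = k then 1 else 0)
          + (if j = 0 then u else w) ⬝ᵥ A⁻¹ *ᵥ (if k = 0 then u else w) := by
    intro j k
    have h1 : (1 : Matrix (Fin 2) (Fin 2) ℝ) j k = if j = k then 1 else 0 := Matrix.one_apply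
    rw [Matrix.add_apply, h1, ← comp]
    congr 1
    simp only [Matrix.mul_apply, Matrix.of_apply]
    refine Finset.sum_congr rfl fun x _ => ?_
    split_ifs <;> rfl
  rw [e 0 0, e 0 1, e 1 0, e 1 1]
  norm_num
  have hcs := cs hinv.posSemidef u w
  have hb : w ⬝ᵥ A⁻¹ *ᵥ u = u ⬝ᵥ A⁻¹ *ᵥ w := hsym w u
  rw [hb]
  nlinarith [hA.det_pos, sq_nonneg (u ⬝ᵥ A⁻¹ *ᵥ w)]

lemma psd_vecMulVec (u : Fin d → ℝ) : (vecMulVec u u).PosSemidef := by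
  refine Matrix.PosSemidef.of_dotProduct_mulVec_nonneg ?_ ?_
  · ext i j
    simp [vecMulVec, mul_comm, Matrix.conjTranspose_apply]
  · intro x
    have h : x ⬝ᵥ (vecMulVec u u) *ᵥ x = (u ⬝ᵥ x) * (u ⬝ᵥ x) := by
      simp [vecMulVec, dotProduct, Matrix.mulVec, Finset.sum_mul, Finset.mul_sum]
      rw [Finset.sum_comm]
      congr 1; ext i; congr 1; ext j; ring
    simpa [h] using mul_self_nonneg (u ⬝ᵥ x)

lemma pd_smul_one {ε : ℝ} (hε : 0 < ε) : (ε • (1 : Matrix (Fin d) (Fin d) ℝ)).PosDef := by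
  refine Matrix.PosDef.of_dotProduct_mulVec_pos ?_ ?_
  · unfold Matrix.IsHermitian
    rw [Matrix.conjTranspose_smul]
    simp
  · intro x hx
    rw [Matrix.smul_mulVec, Matrix.one_mulVec, dotProduct_smul]
    rw [smul_eq_mul]
    exact mul_pos hε (Matrix.dotProduct_star_self_pos_iff.mpr hx)

lemma key_psd {A : Matrix (Fin d) (Fin d) ℝ} (hA : A.PosSemidef) (u w : Fin d → ℝ) :
    (A + vecMulVec u u).det + (A + vecMulVec w w).det
      ≤ (A + vecMulVec u u + vecMulVec w w).det + A.det := by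
  set F : ℝ → ℝ := fun ε =>
    ((A + ε • 1 + vecMulVec u u + vecMulVec w w).det + (A + ε • 1).det)
      - ((A + ε • 1 + vecMulVec u u).det + (A + ε • 1 + vecMulVec w w).det) with hF
  have hcont : Continuous F := by
    apply Continuous.sub <;> apply Continuous.add <;> apply Continuous.matrix_det <;> fun_prop
  have hpos : ∀ ε : ℝ, 0 < ε → 0 ≤ F ε := by
    intro ε hε
    have hpd : (A + ε • 1).PosDef := Matrix.PosDef.posSemidef_add hA (pd_smul_one hε)
    have := key_pd hpd u w
    simp only [hF]
    linarith
  have h0 : 0 ≤ F 0 := by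
    have tend : Filter.Tendsto F (nhdsWithin (0:ℝ) (Set.Ioi 0)) (nhds (F 0)) :=
      hcont.continuousAt.continuousWithinAt
    refine ge_of_tendsto tend ?_
    filter_upwards [self_mem_nhdsWithin] with ε hε
    exact hpos ε hε
  simp only [hF, zero_smul, add_zero] at h0
  linarith

lemma psd_sum {ι : Type*} (s : Finset ι) (f : ι → Matrix (Fin d) (Fin d) ℝ)
    (h : ∀ j, (f j).PosSemidef) : (∑ j ∈ s, f j).PosSemidef :=
  Finset.sum_induction f _ (fun _ _ ha hb => ha.add hb) Matrix.PosSemidef.zero (fun j _ => h j)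

/-- generic induction: upgrade a rank-one `P` to a general PSD `P`. -/
lemma key_gen {Q : Matrix (Fin d) (Fin d) ℝ}
    (base : ∀ (v : Fin d → ℝ) (A : Matrix (Fin d) (Fin d) ℝ), A.PosSemidef →
      (A + vecMulVec v v).det + (A + Q).det ≤ (A + vecMulVec v v + Q).det + A.det) :
    ∀ (P : Matrix (Fin d) (Fin d) ℝ), P.PosSemidef →
      ∀ (A : Matrix (Fin d) (Fin d) ℝ), A.PosSemidef →
      (A + P).det + (A + Q).det ≤ (A + P + Q).det + A.det := by
  intro P hP A hA
  obtain ⟨C, rfl⟩ := psd_eq_ct_mul hP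
  set R : Fin d → Matrix (Fin d) (Fin d) ℝ := fun j => vecMulVec (fun i => C j i) (fun i => C j i)
    with hR
  have hdecomp : Cᴴ * C = ∑ j, R j := by
    ext i k
    simp [hR, Matrix.mul_apply, vecMulVec, Matrix.conjTranspose_apply, Matrix.sum_apply]
  rw [hdecomp]
  have claim : ∀ s : Finset (Fin d), ∀ A : Matrix (Fin d) (Fin d) ℝ, A.PosSemidef →
      (A + ∑ j ∈ s, R j).det + (A + Q).det ≤ (A + ∑ j ∈ s, R j + Q).det + A.det := by
    intro s
    induction s using Finset.induction_on with
    | empty => intro A hA; simp [add_comm]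
    | @insert a s hna ih =>
      intro A hA
      have hRj : ∀ j, (R j).PosSemidef := fun j => by
        rw [hR]; exact psd_vecMulVec _
      have hPs : (∑ j ∈ s, R j).PosSemidef := psd_sum s R hRj
      have hbase := base (fun i => C a i) (A + ∑ j ∈ s, R j) (hA.add hPs)
      have hih := ih A hA
      rw [Finset.sum_insert hna]
      have e1 : A + (R a + ∑ j ∈ s, R j) = A + (∑ j ∈ s, R j) + vecMulVec (fun i => C a i)
          (fun i => C a i) := by rw [hR]; abel
      rw [e1]
      linarith
  exact claim Finset.univ A hA

lemma key_full {P Q : Matrix (Fin d) (Fin d) ℝ} (hP : P.PosSemidef) (hQ : Q.PosSemidef)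
    {A : Matrix (Fin d) (Fin d) ℝ} (hA : A.PosSemidef) :
    (A + P).det + (A + Q).det ≤ (A + P + Q).det + A.det := by
  have key2 : ∀ (w : Fin d → ℝ) (P' : Matrix (Fin d) (Fin d) ℝ), P'.PosSemidef →
      ∀ (A' : Matrix (Fin d) (Fin d) ℝ), A'.PosSemidef →
      (A' + P').det + (A' + vecMulVec w w).det ≤ (A' + P' + vecMulVec w w).det + A'.det := by
    intro w P' hP' A' hA'
    have := key_gen (Q := vecMulVec w w) (fun v A hA => key_psd hA v w) P' hP' A' hA'
    linarith
  have base' : ∀ (v : Fin d → ℝ) (A' : Matrix (Fin d) (Fin d) ℝ), A'.PosSemidef →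
      (A' + vecMulVec v v).det + (A' + Q).det ≤ (A' + vecMulVec v v + Q).det + A'.det := by
    intro v A' hA'
    have := key2 v Q hQ A' hA'
    have e : A' + Q + vecMulVec v v = A' + vecMulVec v v + Q := by abel
    rw [e] at this
    linarith
  exact key_gen base' P hP A hA

lemma psd_smul {A : Matrix (Fin d) (Fin d) ℝ} (hA : A.PosSemidef) {c : ℝ} (hc : 0 ≤ c) :
    (c • A).PosSemidef := by
  refine Matrix.PosSemidef.of_dotProduct_mulVec_nonneg ?_ ?_
  · unfold Matrix.IsHermitian
    rw [Matrix.conjTranspose_smul]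
    have h : Aᴴ = A := hA.1
    rw [h]
    simp
  · intro x
    rw [Matrix.smul_mulVec, dotProduct_smul, smul_eq_mul]
    exact mul_nonneg hc (hA.dotProduct_mulVec_nonneg x)

end Stmt7Aux

open Stmt7Aux Matrix in
/-- For d×d real symmetric positive definite matrices `M₁, ..., Mₙ`, the function
`v_c(x) = det(∑ᵢ xᵢ Mᵢ)` on the nonnegative orthant is supermodular:
`v_c(x) + v_c(y) ≤ v_c(x ∨ y) + v_c(x ∧ y)` for all `x, y ∈ ℝ₊ⁿ`. -/
theorem stmt7 (n d : ℕ) (M : Fin n → Matrix (Fin d) (Fin d) ℝ)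
    (hMs : ∀ i, (M i).IsSymm) (hM : ∀ i, (M i).PosDef)
    (x y : Fin n → ℝ) (hx : ∀ i, 0 ≤ x i) (hy : ∀ i, 0 ≤ y i) :
    (∑ i, x i • M i).det + (∑ i, y i • M i).det
      ≤ (∑ i, (x ⊔ y) i • M i).det + (∑ i, (x ⊓ y) i • M i).det := by
  classical
  set z : Fin n → ℝ := x ⊓ y with hz
  set A : Matrix (Fin d) (Fin d) ℝ := ∑ i, z i • M i with hA
  set P : Matrix (Fin d) (Fin d) ℝ := ∑ i, (x i - z i) • M i with hP
  set Q : Matrix (Fin d) (Fin d) ℝ := ∑ i, (y i - z i) • M i with hQ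
  have hzx : ∀ i, z i ≤ x i := fun i => inf_le_left
  have hzy : ∀ i, z i ≤ y i := fun i => inf_le_right
  have hApsd : A.PosSemidef := psd_sum _ _ fun i =>
    psd_smul (hM i).posSemidef (le_min (hx i) (hy i))
  have hPpsd : P.PosSemidef := psd_sum _ _ fun i =>
    psd_smul (hM i).posSemidef (sub_nonneg.mpr (hzx i))
  have hQpsd : Q.PosSemidef := psd_sum _ _ fun i =>
    psd_smul (hM i).posSemidef (sub_nonneg.mpr (hzy i))
  have hxeq : ∑ i, x i • M i = A + P := by
    rw [hA, hP, ← Finset.sum_add_distrib]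
    refine Finset.sum_congr rfl fun i _ => ?_
    rw [← add_smul]
    congr 1
    ring
  have hyeq : ∑ i, y i • M i = A + Q := by
    rw [hA, hQ, ← Finset.sum_add_distrib]
    refine Finset.sum_congr rfl fun i _ => ?_
    rw [← add_smul]
    congr 1
    ring
  have hsupeq : ∑ i, (x ⊔ y) i • M i = A + P + Q := by
    rw [hA, hP, hQ, ← Finset.sum_add_distrib, ← Finset.sum_add_distrib]
    refine Finset.sum_congr rfl fun i _ => ?_
    rw [← add_smul, ← add_smul]
    congr 1
    have hmin : z i = min (x i) (y i) := rfl
    have hmax : (x ⊔ y) i = max (x i) (y i) := rfl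
    rw [hmax, hmin]
    rcases le_total (x i) (y i) with h | h
    · rw [max_eq_right h, min_eq_left h]; ring
    · rw [max_eq_left h, min_eq_right h]; ring
  rw [hxeq, hyeq, hsupeq]
  exact key_full hPpsd hQpsd hApsd
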